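/- (Donald's identity.) For all positive semidefinite complex matrices ρ, σ, ω of the same finite size and every real number p ∈ [0,1], writing p̄ = 1−p, one has p·D(ρ‖ω) + p̄·D(σ‖ω) = p·D(ρ‖pρ+p̄σ) + p̄·D(σ‖pρ+p̄σ) + D(pρ+p̄σ‖ω), with equality in [0,+∞] under the convention 0·(+∞) = 0. -/

import Mathlib

open scoped ENNReal ComplexOrder

/-- `Log X`: functional calculus of the real logarithm (with `log 0 = 0`)
applied to a Hermitian (in particular, positive semidefinite) matrix `X`;
defined as `0` on non-Hermitian matrices. -/
noncomputable def matLog {n : Type*} [Fintype n] [DecidableEq n]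
    (X : Matrix n n ℂ) : Matrix n n ℂ :=
  if hX : X.IsHermitian then hX.cfc Real.log else 0

/-- Lindblad's extended quantum relative entropy `D(ρ‖σ)`, with values in `[0,+∞]`:
`D(ρ‖σ) = Tr(ρ·Log ρ) − Tr(ρ·Log σ) + Tr σ − Tr ρ` if `ran ρ ⊆ ran σ`, and `+∞` otherwise. -/
noncomputable def relEnt {n : Type*} [Fintype n] [DecidableEq n]
    (ρ σ : Matrix n n ℂ) : ℝ≥0∞ :=
  open Classical in
  if LinearMap.range ρ.mulVecLin ≤ LinearMap.range σ.mulVecLin then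
    ENNReal.ofReal ((ρ * matLog ρ).trace.re - (ρ * matLog σ).trace.re
      + σ.trace.re - ρ.trace.re)
  else ∞

namespace DonaldAux

open Matrix Finset

variable {n : Type*} [Fintype n] [DecidableEq n]

/-! ### Range and kernel facts -/

lemma range_toEuclideanLin_eq {M : Matrix n n ℂ} (hM : M.IsHermitian) :
    LinearMap.range (Matrix.toEuclideanLin M)
      = (LinearMap.ker (Matrix.toEuclideanLin M))ᗮ := by
  set T := Matrix.toEuclideanLin M with hT
  have hadj : LinearMap.adjoint T = T := by
    rw [hT, ← Matrix.toEuclideanLin_conjTranspose_eq_adjoint, hM.eq]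
  have hle : LinearMap.range T ≤ (LinearMap.ker T)ᗮ := by
    rintro _ ⟨x, rfl⟩
    rw [Submodule.mem_orthogonal]
    intro u hu
    rw [← LinearMap.adjoint_inner_left, hadj, LinearMap.mem_ker.mp hu, inner_zero_left]
  refine Submodule.eq_of_le_of_finrank_eq hle ?_
  have h1 := LinearMap.finrank_range_add_finrank_ker T
  have h2 := Submodule.finrank_add_finrank_orthogonal (𝕜 := ℂ) (LinearMap.ker T)
  omega

lemma range_le_range_of_ker_le {M N : Matrix n n ℂ} (hM : M.IsHermitian) (hN : N.IsHermitian)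
    (h : ∀ x, N *ᵥ x = 0 → M *ᵥ x = 0) :
    LinearMap.range M.mulVecLin ≤ LinearMap.range N.mulVecLin := by
  have key : LinearMap.range (Matrix.toEuclideanLin M)
      ≤ LinearMap.range (Matrix.toEuclideanLin N) := by
    rw [range_toEuclideanLin_eq hM, range_toEuclideanLin_eq hN]
    apply Submodule.orthogonal_le
    intro x hx
    rw [LinearMap.mem_ker] at hx ⊢
    have hx' : N *ᵥ (WithLp.equiv 2 (n → ℂ) x) = 0 := by
      have := congrArg (WithLp.equiv 2 (n → ℂ)) hx
      simpa [Matrix.toEuclideanLin_apply] using this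
    have := h _ hx'
    apply (WithLp.equiv 2 (n → ℂ)).symm.injective.eq_iff.mpr at this
    simpa [Matrix.toEuclideanLin_apply] using this
  rintro _ ⟨x, rfl⟩
  have hmem : Matrix.toEuclideanLin M ((WithLp.equiv 2 (n → ℂ)).symm x)
      ∈ LinearMap.range (Matrix.toEuclideanLin N) := key (LinearMap.mem_range_self _ _)
  obtain ⟨y, hy⟩ := hmem
  refine ⟨WithLp.equiv 2 (n → ℂ) y, ?_⟩
  have := congrArg (WithLp.equiv 2 (n → ℂ)) hy
  simpa [Matrix.toEuclideanLin_apply, Matrix.mulVecLin_apply] using this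

lemma mulVec_eq_zero_of_range_le {ρ σ : Matrix n n ℂ} (hρ : ρ.PosSemidef) (hσ : σ.IsHermitian)
    (h : LinearMap.range ρ.mulVecLin ≤ LinearMap.range σ.mulVecLin)
    {x : n → ℂ} (hx : σ *ᵥ x = 0) : ρ *ᵥ x = 0 := by
  obtain ⟨y, hy⟩ := h (LinearMap.mem_range_self ρ.mulVecLin x)
  simp only [Matrix.mulVecLin_apply] at hy
  rw [← hρ.dotProduct_mulVec_zero_iff]
  calc dotProduct (star x) (ρ *ᵥ x) = dotProduct (star x) (σ *ᵥ y) := by rw [hy]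
    _ = dotProduct (Matrix.vecMul (star x) σ) y := dotProduct_mulVec _ _ _
    _ = 0 := by
        have : Matrix.vecMul (star x) σ = star (σ *ᵥ x) := by
          rw [Matrix.star_mulVec, hσ.eq]
        rw [this, hx, star_zero, zero_dotProduct]

lemma posSemidef_smul {ρ : Matrix n n ℂ} (hρ : ρ.PosSemidef) {p : ℝ} (hp : 0 ≤ p) :
    ((p : ℂ) • ρ).PosSemidef := by
  refine Matrix.PosSemidef.of_dotProduct_mulVec_nonneg ?_ ?_
  · unfold Matrix.IsHermitian
    rw [Matrix.conjTranspose_smul, hρ.1.eq]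
    congr 1
    simp
  · intro x
    rw [Matrix.smul_mulVec, dotProduct_smul]
    exact mul_nonneg (by exact_mod_cast hp) (hρ.dotProduct_mulVec_nonneg x)

lemma smul_add_posSemidef {ρ σ : Matrix n n ℂ} (hρ : ρ.PosSemidef) (hσ : σ.PosSemidef)
    {p q : ℝ} (hp : 0 ≤ p) (hq : 0 ≤ q) :
    ((p : ℂ) • ρ + (q : ℂ) • σ).PosSemidef :=
  Matrix.PosSemidef.add (posSemidef_smul hρ hp) (posSemidef_smul hσ hq)

lemma range_le_range_smul_add {ρ σ : Matrix n n ℂ} (hρ : ρ.PosSemidef) (hσ : σ.PosSemidef)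
    {p q : ℝ} (hp : 0 < p) (hq : 0 ≤ q) :
    LinearMap.range ρ.mulVecLin ≤ LinearMap.range ((p : ℂ) • ρ + (q : ℂ) • σ).mulVecLin := by
  apply range_le_range_of_ker_le hρ.1 (smul_add_posSemidef hρ hσ hp.le hq).1
  intro x hx
  have h0 : (p : ℂ) * dotProduct (star x) (ρ *ᵥ x)
      + (q : ℂ) * dotProduct (star x) (σ *ᵥ x) = 0 := by
    have := congrArg (fun v => dotProduct (star x) v) hx
    simpa [Matrix.add_mulVec, Matrix.smul_mulVec, dotProduct_add,
      dotProduct_smul, smul_eq_mul] using this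
  have ha : 0 ≤ (p : ℂ) * dotProduct (star x) (ρ *ᵥ x) :=
    mul_nonneg (by exact_mod_cast hp.le) (hρ.dotProduct_mulVec_nonneg x)
  have hb : 0 ≤ (q : ℂ) * dotProduct (star x) (σ *ᵥ x) :=
    mul_nonneg (by exact_mod_cast hq) (hσ.dotProduct_mulVec_nonneg x)
  have hpa : (p : ℂ) * dotProduct (star x) (ρ *ᵥ x) = 0 :=
    ((add_eq_zero_iff_of_nonneg ha hb).mp h0).1
  have : dotProduct (star x) (ρ *ᵥ x) = 0 := by
    have hpne : (p : ℂ) ≠ 0 := by exact_mod_cast hp.ne'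
    exact (mul_eq_zero.mp hpa).resolve_left hpne
  exact (hρ.dotProduct_mulVec_zero_iff x).mp this

lemma range_smul_add_le {ρ σ ω : Matrix n n ℂ} {p q : ℝ}
    (h1 : LinearMap.range ρ.mulVecLin ≤ LinearMap.range ω.mulVecLin)
    (h2 : LinearMap.range σ.mulVecLin ≤ LinearMap.range ω.mulVecLin) :
    LinearMap.range ((p : ℂ) • ρ + (q : ℂ) • σ).mulVecLin ≤ LinearMap.range ω.mulVecLin := by
  rintro _ ⟨x, rfl⟩
  obtain ⟨u, hu⟩ := h1 (LinearMap.mem_range_self ρ.mulVecLin x)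
  obtain ⟨v, hv⟩ := h2 (LinearMap.mem_range_self σ.mulVecLin x)
  refine ⟨(p : ℂ) • u + (q : ℂ) • v, ?_⟩
  simp only [Matrix.mulVecLin_apply] at *
  simp [Matrix.add_mulVec, Matrix.smul_mulVec, Matrix.mulVec_add, Matrix.mulVec_smul,
    hu, hv]

/-! ### Spectral machinery -/

lemma unit_mul_star {σ : Matrix n n ℂ} (hσ : σ.IsHermitian) :
    (hσ.eigenvectorUnitary : Matrix n n ℂ) * star (hσ.eigenvectorUnitary : Matrix n n ℂ) = 1 := by
  simpa [Unitary.coe_star] using unitary.coe_mul_star_self hσ.eigenvectorUnitary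

lemma unit_star_mul {σ : Matrix n n ℂ} (hσ : σ.IsHermitian) :
    star (hσ.eigenvectorUnitary : Matrix n n ℂ) * (hσ.eigenvectorUnitary : Matrix n n ℂ) = 1 := by
  simpa [Unitary.coe_star] using unitary.coe_star_mul_self hσ.eigenvectorUnitary

lemma trace_mul_cfc (ρ : Matrix n n ℂ) {σ : Matrix n n ℂ} (hσ : σ.IsHermitian) (f : ℝ → ℝ) :
    (ρ * hσ.cfc f).trace
      = ∑ j, ((star (hσ.eigenvectorUnitary : Matrix n n ℂ) * ρ * hσ.eigenvectorUnitary) j j)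
          * (f (hσ.eigenvalues j) : ℂ) := by
  rw [Matrix.IsHermitian.cfc, Unitary.conjStarAlgAut_apply]
  have h1 : ρ * ((hσ.eigenvectorUnitary : Matrix n n ℂ)
        * diagonal (RCLike.ofReal ∘ f ∘ hσ.eigenvalues)
        * star (hσ.eigenvectorUnitary : Matrix n n ℂ))
      = (ρ * (hσ.eigenvectorUnitary : Matrix n n ℂ)
        * diagonal (RCLike.ofReal ∘ f ∘ hσ.eigenvalues))
        * star (hσ.eigenvectorUnitary : Matrix n n ℂ) := by
    rw [← Matrix.mul_assoc, ← Matrix.mul_assoc]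
  rw [h1, Matrix.trace_mul_comm, ← Matrix.mul_assoc, ← Matrix.mul_assoc]
  simp only [Matrix.trace, Matrix.diag, Matrix.mul_diagonal]
  rfl

lemma trace_conj (ρ : Matrix n n ℂ) {σ : Matrix n n ℂ} (hσ : σ.IsHermitian) :
    ρ.trace = ∑ j, ((star (hσ.eigenvectorUnitary : Matrix n n ℂ) * ρ * hσ.eigenvectorUnitary) j j) := by
  have : (star (hσ.eigenvectorUnitary : Matrix n n ℂ) * ρ * hσ.eigenvectorUnitary).trace
      = ρ.trace := by
    rw [Matrix.trace_mul_cycle, unit_mul_star hσ, Matrix.one_mul]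
  rw [← this]
  rfl

lemma conj_self_diag {σ : Matrix n n ℂ} (hσ : σ.IsHermitian) (j : n) :
    (star (hσ.eigenvectorUnitary : Matrix n n ℂ) * σ * hσ.eigenvectorUnitary) j j
      = (hσ.eigenvalues j : ℂ) := by
  rw [show star (hσ.eigenvectorUnitary : Matrix n n ℂ) * σ * hσ.eigenvectorUnitary
      = Unitary.conjStarAlgAut ℂ _ (star hσ.eigenvectorUnitary) σ by simp,
    hσ.conjStarAlgAut_star_eigenvectorUnitary]
  simp

/-- the transition matrix `W = Vᴴ U` between two eigenbases. -/
noncomputable def Wmat {ρ σ : Matrix n n ℂ} (hρ : ρ.IsHermitian) (hσ : σ.IsHermitian) :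
    Matrix n n ℂ :=
  star (hρ.eigenvectorUnitary : Matrix n n ℂ) * (hσ.eigenvectorUnitary : Matrix n n ℂ)

section W
variable {ρ σ : Matrix n n ℂ} (hρ : ρ.IsHermitian) (hσ : σ.IsHermitian)

lemma Wmat_star_mul : star (Wmat hρ hσ) * Wmat hρ hσ = 1 := by
  unfold Wmat
  rw [Matrix.star_mul, star_star, Matrix.mul_assoc,
    ← Matrix.mul_assoc (hρ.eigenvectorUnitary : Matrix n n ℂ),
    unit_mul_star hρ, Matrix.one_mul, unit_star_mul hσ]

lemma Wmat_mul_star : Wmat hρ hσ * star (Wmat hρ hσ) = 1 := by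
  unfold Wmat
  rw [Matrix.star_mul, star_star, Matrix.mul_assoc,
    ← Matrix.mul_assoc (hσ.eigenvectorUnitary : Matrix n n ℂ),
    unit_mul_star hσ, Matrix.one_mul, unit_star_mul hρ]

lemma Wmat_row_sum (i : n) : ∑ j, Complex.normSq (Wmat hρ hσ i j) = 1 := by
  have h := congrFun (congrFun (Wmat_mul_star hρ hσ) i) i
  simp only [Matrix.mul_apply, Matrix.one_apply_eq, Matrix.star_apply] at h
  have : ∀ j, Wmat hρ hσ i j * star (Wmat hρ hσ i j)
      = (Complex.normSq (Wmat hρ hσ i j) : ℂ) := fun j => Complex.mul_conj _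
  rw [Finset.sum_congr rfl (fun j _ => this j)] at h
  exact_mod_cast h

lemma Wmat_col_sum (j : n) : ∑ i, Complex.normSq (Wmat hρ hσ i j) = 1 := by
  have h := congrFun (congrFun (Wmat_star_mul hρ hσ) j) j
  simp only [Matrix.mul_apply, Matrix.one_apply_eq, Matrix.star_apply] at h
  have : ∀ i, star (Wmat hρ hσ i j) * Wmat hρ hσ i j
      = (Complex.normSq (Wmat hρ hσ i j) : ℂ) := fun i => by
    rw [mul_comm]; exact Complex.mul_conj _
  rw [Finset.sum_congr rfl (fun i _ => this i)] at h
  exact_mod_cast h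

lemma conj_diag_eq_sum (j : n) :
    (star (hσ.eigenvectorUnitary : Matrix n n ℂ) * ρ * hσ.eigenvectorUnitary) j j
      = ∑ i, (hρ.eigenvalues i : ℂ) * (Complex.normSq (Wmat hρ hσ i j) : ℂ) := by
  have key : star (hσ.eigenvectorUnitary : Matrix n n ℂ) * ρ
        * (hσ.eigenvectorUnitary : Matrix n n ℂ)
      = star (Wmat hρ hσ) * Matrix.diagonal (RCLike.ofReal ∘ hρ.eigenvalues) * Wmat hρ hσ := by
    have hsw : star (Wmat hρ hσ) = star (hσ.eigenvectorUnitary : Matrix n n ℂ)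
        * (hρ.eigenvectorUnitary : Matrix n n ℂ) := by
      show star (star (hρ.eigenvectorUnitary : Matrix n n ℂ)
        * (hσ.eigenvectorUnitary : Matrix n n ℂ)) = _
      rw [Matrix.star_mul, star_star]
    rw [hsw]
    show _ = _ * _ * (star (hρ.eigenvectorUnitary : Matrix n n ℂ)
      * (hσ.eigenvectorUnitary : Matrix n n ℂ))
    conv_lhs => rw [hρ.spectral_theorem, Unitary.conjStarAlgAut_apply]
    simp only [Matrix.mul_assoc]
  rw [key, Matrix.mul_apply]
  refine Finset.sum_congr rfl fun i _ => ?_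
  have h1 : ((star (Wmat hρ hσ)
      * Matrix.diagonal (RCLike.ofReal ∘ hρ.eigenvalues) : Matrix n n ℂ)) j i
      = star (Wmat hρ hσ i j) * (hρ.eigenvalues i : ℂ) := by
    rw [Matrix.mul_diagonal]
    rfl
  rw [h1, mul_comm (star _), mul_assoc]
  rw [show star (Wmat hρ hσ i j) * Wmat hρ hσ i j = ((Complex.normSq (Wmat hρ hσ i j) : ℂ)) by
    rw [mul_comm]; exact Complex.mul_conj _]

end W

lemma conj_diag_eq_zero {ρ σ : Matrix n n ℂ} (hρ : ρ.PosSemidef) (hσ : σ.PosSemidef)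
    (h : LinearMap.range ρ.mulVecLin ≤ LinearMap.range σ.mulVecLin)
    {j : n} (hj : hσ.1.eigenvalues j = 0) :
    (star (hσ.1.eigenvectorUnitary : Matrix n n ℂ) * ρ * hσ.1.eigenvectorUnitary) j j = 0 := by
  have hker : σ *ᵥ ⇑(hσ.1.eigenvectorBasis j) = 0 := by
    rw [hσ.1.mulVec_eigenvectorBasis, hj, zero_smul]
  have hρker : ρ *ᵥ ⇑(hσ.1.eigenvectorBasis j) = 0 :=
    mulVec_eq_zero_of_range_le hρ hσ.1 h hker
  rw [Matrix.mul_apply]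
  have hUcol : ∀ i, (hσ.1.eigenvectorUnitary : Matrix n n ℂ) i j = hσ.1.eigenvectorBasis j i :=
    fun i => hσ.1.eigenvectorUnitary_apply i j
  calc ∑ k, (star (hσ.1.eigenvectorUnitary : Matrix n n ℂ) * ρ) j k
        * (hσ.1.eigenvectorUnitary : Matrix n n ℂ) k j
      = ∑ k, ∑ l, star ((hσ.1.eigenvectorUnitary : Matrix n n ℂ) l j) * ρ l k
          * hσ.1.eigenvectorBasis j k := by
        refine Finset.sum_congr rfl fun k _ => ?_
        rw [Matrix.mul_apply, hUcol k, Finset.sum_mul]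
        refine Finset.sum_congr rfl fun l _ => ?_
        rw [Matrix.star_apply]
    _ = ∑ l, star ((hσ.1.eigenvectorUnitary : Matrix n n ℂ) l j)
          * (ρ *ᵥ ⇑(hσ.1.eigenvectorBasis j)) l := by
        rw [Finset.sum_comm]
        refine Finset.sum_congr rfl fun l _ => ?_
        rw [Matrix.mulVec, dotProduct, Finset.mul_sum]
        refine Finset.sum_congr rfl fun k _ => ?_
        rw [mul_assoc]
    _ = 0 := by rw [hρker]; simp

lemma conj_diag_nonneg {ρ : Matrix n n ℂ} (hρ : ρ.PosSemidef) {σ : Matrix n n ℂ}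
    (hσ : σ.IsHermitian) (j : n) :
    0 ≤ ((star (hσ.eigenvectorUnitary : Matrix n n ℂ) * ρ * hσ.eigenvectorUnitary) j j).re
    ∧ ((star (hσ.eigenvectorUnitary : Matrix n n ℂ) * ρ * hσ.eigenvectorUnitary) j j).im = 0 := by
  have hpsd : (star (hσ.eigenvectorUnitary : Matrix n n ℂ) * ρ
      * hσ.eigenvectorUnitary).PosSemidef := by
    have := hρ.conjTranspose_mul_mul_same (hσ.eigenvectorUnitary : Matrix n n ℂ)
    simpa [Matrix.star_eq_conjTranspose] using this
  set M := star (hσ.eigenvectorUnitary : Matrix n n ℂ) * ρ * hσ.eigenvectorUnitary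
  have h0 : 0 ≤ M j j := by
    have := hpsd.dotProduct_mulVec_nonneg (Pi.single j 1)
    simpa [dotProduct, Matrix.mulVec_single, Pi.single_apply, Finset.sum_ite_eq',
      mul_comm] using this
  rw [Complex.le_def] at h0
  simp only [Complex.zero_re, Complex.zero_im] at h0
  exact ⟨h0.1, h0.2.symm⟩

/-! ### Klein's inequality -/

lemma scalar_klein {a b : ℝ} (ha : 0 < a) (hb : 0 < b) :
    0 ≤ a * Real.log a - a * Real.log b + (b - a) := by
  have h := Real.log_le_sub_one_of_pos (div_pos hb ha)
  rw [Real.log_div hb.ne' ha.ne'] at h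
  have := mul_le_mul_of_nonneg_left h ha.le
  rw [mul_sub] at this
  have hba : a * (b / a) = b := by field_simp
  nlinarith

lemma klein {ρ σ : Matrix n n ℂ} (hρ : ρ.PosSemidef) (hσ : σ.PosSemidef)
    (h : LinearMap.range ρ.mulVecLin ≤ LinearMap.range σ.mulVecLin) :
    0 ≤ (ρ * matLog ρ).trace.re - (ρ * matLog σ).trace.re + σ.trace.re - ρ.trace.re := by
  set lam := hρ.1.eigenvalues with hlam
  set mu := hσ.1.eigenvalues with hmu
  set P : n → n → ℝ := fun i j => Complex.normSq (Wmat hρ.1 hσ.1 i j) with hP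
  have hPnn : ∀ i j, 0 ≤ P i j := fun i j => Complex.normSq_nonneg _
  have hlamnn : ∀ i, 0 ≤ lam i := fun i => hρ.eigenvalues_nonneg i
  have hmunn : ∀ j, 0 ≤ mu j := fun j => hσ.eigenvalues_nonneg j
  have hA : ∀ j, ((star (hσ.1.eigenvectorUnitary : Matrix n n ℂ) * ρ
      * hσ.1.eigenvectorUnitary) j j).re = ∑ i, lam i * P i j := by
    intro j
    rw [conj_diag_eq_sum hρ.1 hσ.1 j]
    rw [Complex.re_sum]
    refine Finset.sum_congr rfl fun i _ => ?_
    rw [← Complex.ofReal_mul]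
    exact Complex.ofReal_re _
  have hmatLogρ : matLog ρ = hρ.1.cfc Real.log := dif_pos hρ.1
  have hmatLogσ : matLog σ = hσ.1.cfc Real.log := dif_pos hσ.1
  have t1 : (ρ * matLog ρ).trace.re = ∑ i, lam i * Real.log (lam i) := by
    rw [hmatLogρ, trace_mul_cfc ρ hρ.1 Real.log, Complex.re_sum]
    refine Finset.sum_congr rfl fun i _ => ?_
    rw [conj_self_diag hρ.1 i, ← Complex.ofReal_mul]
    exact Complex.ofReal_re _
  have t2 : (ρ * matLog σ).trace.re = ∑ j, (∑ i, lam i * P i j) * Real.log (mu j) := by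
    rw [hmatLogσ, trace_mul_cfc ρ hσ.1 Real.log, Complex.re_sum]
    refine Finset.sum_congr rfl fun j _ => ?_
    rw [← hA j]
    simp [Complex.mul_re]
    exact Or.inl rfl
  have t3 : σ.trace.re = ∑ j, mu j := by
    rw [trace_conj σ hσ.1, Complex.re_sum]
    refine Finset.sum_congr rfl fun j _ => ?_
    rw [conj_self_diag hσ.1 j]
    exact Complex.ofReal_re _
  have t4 : ρ.trace.re = ∑ j, ∑ i, lam i * P i j := by
    rw [trace_conj ρ hσ.1, Complex.re_sum]
    exact Finset.sum_congr rfl fun j _ => hA j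
  have hzero : ∀ j, mu j = 0 → ∀ i, lam i * P i j = 0 := by
    intro j hj i
    have h0 : ∑ i, lam i * P i j = 0 := by
      rw [← hA j, conj_diag_eq_zero hρ hσ h hj, Complex.zero_re]
    have := (Finset.sum_eq_zero_iff_of_nonneg
      (fun i _ => mul_nonneg (hlamnn i) (hPnn i j))).mp h0
    exact this i (Finset.mem_univ i)
  rw [t1, t2, t3, t4]
  have key : ∑ i, lam i * Real.log (lam i) - ∑ j, (∑ i, lam i * P i j) * Real.log (mu j)
        + ∑ j, mu j - ∑ j, ∑ i, lam i * P i j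
      = ∑ j, ∑ i, (P i j * (lam i * Real.log (lam i) - lam i * Real.log (mu j)
          + (mu j - lam i))) := by
    have e1 : ∑ i, lam i * Real.log (lam i)
        = ∑ j, ∑ i, P i j * (lam i * Real.log (lam i)) := by
      rw [Finset.sum_comm]
      refine Finset.sum_congr rfl fun i _ => ?_
      rw [← Finset.sum_mul, Wmat_row_sum hρ.1 hσ.1 i, one_mul]
    have e3 : ∑ j, mu j = ∑ j, ∑ i, P i j * mu j := by
      refine Finset.sum_congr rfl fun j _ => ?_
      rw [← Finset.sum_mul, Wmat_col_sum hρ.1 hσ.1 j, one_mul]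
    have e2 : ∀ j, (∑ i, lam i * P i j) * Real.log (mu j)
        = ∑ i, P i j * (lam i * Real.log (mu j)) := by
      intro j
      rw [Finset.sum_mul]
      exact Finset.sum_congr rfl fun i _ => by ring
    have e4 : ∀ j, ∑ i, lam i * P i j = ∑ i, P i j * lam i :=
      fun j => Finset.sum_congr rfl fun i _ => by ring
    rw [e1, e3]
    rw [Finset.sum_congr rfl fun j _ => e2 j, Finset.sum_congr rfl fun j _ => e4 j]
    rw [← Finset.sum_sub_distrib, ← Finset.sum_add_distrib, ← Finset.sum_sub_distrib]
    refine Finset.sum_congr rfl fun j _ => ?_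
    rw [← Finset.sum_sub_distrib, ← Finset.sum_add_distrib, ← Finset.sum_sub_distrib]
    refine Finset.sum_congr rfl fun i _ => ?_
    ring
  rw [key]
  refine Finset.sum_nonneg fun j _ => Finset.sum_nonneg fun i _ => ?_
  rcases (hlamnn i).eq_or_lt with hl | hl
  · simp [← hl]
    exact mul_nonneg (hPnn i j) (hmunn j)
  rcases (hmunn j).eq_or_lt with hm | hm
  · have : P i j = 0 := by
      have := hzero j hm.symm i
      exact (mul_eq_zero.mp this).resolve_left hl.ne'
    simp [this]
  · exact mul_nonneg (hPnn i j) (scalar_klein hl hm)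

/-! ### relEnt basic lemmas -/

lemma relEnt_of_le {ρ σ : Matrix n n ℂ}
    (h : LinearMap.range ρ.mulVecLin ≤ LinearMap.range σ.mulVecLin) :
    relEnt ρ σ = ENNReal.ofReal ((ρ * matLog ρ).trace.re - (ρ * matLog σ).trace.re
      + σ.trace.re - ρ.trace.re) := by
  rw [relEnt, if_pos h]

lemma relEnt_of_not_le {ρ σ : Matrix n n ℂ}
    (h : ¬ LinearMap.range ρ.mulVecLin ≤ LinearMap.range σ.mulVecLin) :
    relEnt ρ σ = ∞ := by
  rw [relEnt, if_neg h]

lemma relEnt_self (σ : Matrix n n ℂ) : relEnt σ σ = 0 := by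
  rw [relEnt_of_le le_rfl]
  have : (σ * matLog σ).trace.re - (σ * matLog σ).trace.re + σ.trace.re - σ.trace.re = 0 := by
    ring
  rw [this, ENNReal.ofReal_zero]

end DonaldAux
open DonaldAux in
/-- Donald's identity. -/
theorem relEnt_donald_identity {n : Type*} [Fintype n] [DecidableEq n]
    (ρ σ ω : Matrix n n ℂ)
    (hρ : ρ.PosSemidef) (hσ : σ.PosSemidef) (hω : ω.PosSemidef)
    (p : ℝ) (hp0 : 0 ≤ p) (hp1 : p ≤ 1) :
    ENNReal.ofReal p * relEnt ρ ω + ENNReal.ofReal (1 - p) * relEnt σ ω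
      = ENNReal.ofReal p * relEnt ρ ((p : ℂ) • ρ + ((1 - p : ℝ) : ℂ) • σ)
        + ENNReal.ofReal (1 - p) * relEnt σ ((p : ℂ) • ρ + ((1 - p : ℝ) : ℂ) • σ)
        + relEnt ((p : ℂ) • ρ + ((1 - p : ℝ) : ℂ) • σ) ω := by
  by_cases hp : p = 0
  · subst hp
    have hτ : ((0 : ℝ) : ℂ) • ρ + ((1 - 0 : ℝ) : ℂ) • σ = σ := by
      norm_num
    rw [hτ]
    simp [relEnt_self]
  by_cases hq : p = 1
  · subst hq
    have hτ : ((1 : ℝ) : ℂ) • ρ + ((1 - 1 : ℝ) : ℂ) • σ = ρ := by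
      norm_num
    rw [hτ]
    simp [relEnt_self]
  have hp' : 0 < p := lt_of_le_of_ne hp0 (Ne.symm hp)
  have hq' : 0 < 1 - p := by
    rcases lt_or_eq_of_le hp1 with h | h
    · linarith
    · exact absurd h hq
  have hq0 : (0 : ℝ) ≤ 1 - p := hq'.le
  have hτpsd : (((p : ℝ) : ℂ) • ρ + ((1 - p : ℝ) : ℂ) • σ).PosSemidef :=
    smul_add_posSemidef hρ hσ hp0 hq0
  have hρτ : LinearMap.range ρ.mulVecLin
      ≤ LinearMap.range (((p : ℝ) : ℂ) • ρ + ((1 - p : ℝ) : ℂ) • σ).mulVecLin :=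
    range_le_range_smul_add hρ hσ hp' hq0
  have hστ : LinearMap.range σ.mulVecLin
      ≤ LinearMap.range (((p : ℝ) : ℂ) • ρ + ((1 - p : ℝ) : ℂ) • σ).mulVecLin := by
    rw [add_comm]
    exact range_le_range_smul_add hσ hρ hq' hp0
  by_cases hρω : LinearMap.range ρ.mulVecLin ≤ LinearMap.range ω.mulVecLin
  · by_cases hσω : LinearMap.range σ.mulVecLin ≤ LinearMap.range ω.mulVecLin
    · -- finite case
      have hτω : LinearMap.range (((p : ℝ) : ℂ) • ρ + ((1 - p : ℝ) : ℂ) • σ).mulVecLin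
          ≤ LinearMap.range ω.mulVecLin := range_smul_add_le hρω hσω
      set τ := ((p : ℝ) : ℂ) • ρ + ((1 - p : ℝ) : ℂ) • σ with hτdef
      set Dρω := (ρ * matLog ρ).trace.re - (ρ * matLog ω).trace.re
        + ω.trace.re - ρ.trace.re with hDρω
      set Dσω := (σ * matLog σ).trace.re - (σ * matLog ω).trace.re
        + ω.trace.re - σ.trace.re with hDσω
      set Dρτ := (ρ * matLog ρ).trace.re - (ρ * matLog τ).trace.re
        + τ.trace.re - ρ.trace.re with hDρτ
      set Dστ := (σ * matLog σ).trace.re - (σ * matLog τ).trace.re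
        + τ.trace.re - σ.trace.re with hDστ
      set Dτω := (τ * matLog τ).trace.re - (τ * matLog ω).trace.re
        + ω.trace.re - τ.trace.re with hDτω
      have k1 := klein hρ hω hρω
      have k2 := klein hσ hω hσω
      have k3 := klein hρ hτpsd hρτ
      have k4 := klein hσ hτpsd hστ
      have k5 := klein hτpsd hω hτω
      rw [relEnt_of_le hρω, relEnt_of_le hσω, relEnt_of_le hρτ, relEnt_of_le hστ,
        relEnt_of_le hτω]
      rw [← ENNReal.ofReal_mul hp0, ← ENNReal.ofReal_mul hq0, ← ENNReal.ofReal_mul hp0,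
        ← ENNReal.ofReal_mul hq0]
      rw [← ENNReal.ofReal_add (mul_nonneg hp0 k1) (mul_nonneg hq0 k2),
        ← ENNReal.ofReal_add (mul_nonneg hp0 k3) (mul_nonneg hq0 k4),
        ← ENNReal.ofReal_add (add_nonneg (mul_nonneg hp0 k3) (mul_nonneg hq0 k4)) k5]
      congr 1
      -- the real identity
      have hmul : ∀ M : Matrix n n ℂ, (τ * M).trace.re
          = p * (ρ * M).trace.re + (1 - p) * (σ * M).trace.re := by
        intro M
        rw [hτdef, Matrix.add_mul, Matrix.smul_mul, Matrix.smul_mul, Matrix.trace_add,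
          Matrix.trace_smul, Matrix.trace_smul]
        simp [Complex.add_re, smul_eq_mul, Complex.mul_re]
      have htr : τ.trace.re = p * ρ.trace.re + (1 - p) * σ.trace.re := by
        rw [hτdef, Matrix.trace_add, Matrix.trace_smul, Matrix.trace_smul]
        simp [Complex.add_re, smul_eq_mul, Complex.mul_re]
      rw [hmul (matLog τ), hmul (matLog ω), htr]
      ring
    · -- relEnt σ ω = ∞
      have h1 : relEnt σ ω = ∞ := relEnt_of_not_le hσω
      have h2 : relEnt (((p : ℝ) : ℂ) • ρ + ((1 - p : ℝ) : ℂ) • σ) ω = ∞ :=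
        relEnt_of_not_le fun hc => hσω (hστ.trans hc)
      rw [h1, h2]
      have hne : ENNReal.ofReal (1 - p) ≠ 0 := (ENNReal.ofReal_pos.mpr hq').ne'
      rw [ENNReal.mul_top hne]
      simp
  · -- relEnt ρ ω = ∞
    have h1 : relEnt ρ ω = ∞ := relEnt_of_not_le hρω
    have h2 : relEnt (((p : ℝ) : ℂ) • ρ + ((1 - p : ℝ) : ℂ) • σ) ω = ∞ :=
      relEnt_of_not_le fun hc => hρω (hρτ.trans hc)
    rw [h1, h2]
    have hne : ENNReal.ofReal p ≠ 0 := (ENNReal.ofReal_pos.mpr hp').ne'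
    rw [ENNReal.mul_top hne]
    simp
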